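/- The family of associahedra has asymptotic k-length (k−2)/(2k−2): for every integer k ≥ 2, the ratio e_k(K(n)) / E_k(n−2) tends to (k−2)/(2k−2) as n → ∞ (limit in ℝ). -/

import Mathlib

/-- Plane binary trees: a single leaf, or `V₁ ∧ V₂` for plane binary trees `V₁, V₂`. -/
inductive PBT : Type
  | leaf : PBT
  | node : PBT → PBT → PBT

/-- Number of leaves of a plane binary tree. -/
def PBT.leaves : PBT → ℕ
  | .leaf => 1
  | .node a b => a.leaves + b.leaves

/-- `1` if the root is an internal vertex, `0` if it is a leaf. -/
def PBT.isInternal : PBT → ℕ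
  | .leaf => 0
  | .node _ _ => 1

/-- Number of left-leaning internal edges: edges joining an internal vertex to
its left child, that child being internal as well. -/
def PBT.leftE : PBT → ℕ
  | .leaf => 0
  | .node a b => a.leftE + b.leftE + a.isInternal

/-- Number of right-leaning internal edges: edges joining an internal vertex to
its right child, that child being internal as well. -/
def PBT.rightE : PBT → ℕ
  | .leaf => 0
  | .node a b => a.rightE + b.rightE + b.isInternal

/-- One right rotation applied to some subtree: somewhere a subtree
`(a ∧ b) ∧ c` is replaced by `a ∧ (b ∧ c)`. -/
inductive RightRot : PBT → PBT → Prop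
  | rot (a b c : PBT) : RightRot (.node (.node a b) c) (.node a (.node b c))
  | left {a a' : PBT} (b : PBT) : RightRot a a' → RightRot (.node a b) (.node a' b)
  | right (a : PBT) {b b' : PBT} : RightRot b b' → RightRot (.node a b) (.node a b')

/-- The Tamari order: reflexive-transitive closure of right rotation. -/
def Tamari : PBT → PBT → Prop := Relation.ReflTransGen RightRot

mutual
  /-- Schröder trees: plane rooted trees in which every internal vertex has at
  least two children (encoding faces of associahedra). -/
  inductive STree : Type
    | leaf : STree
    | node : SForest → STree
  /-- Lists of at least two Schröder trees (children of an internal vertex). -/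
  inductive SForest : Type
    | two : STree → STree → SForest
    | cons : STree → SForest → SForest
end

mutual
  /-- Number of leaves of a Schröder tree. -/
  def STree.leavesS : STree → ℕ
    | .leaf => 1
    | .node f => f.leavesF
  def SForest.leavesF : SForest → ℕ
    | .two a b => a.leavesS + b.leavesS
    | .cons a f => a.leavesS + f.leavesF
end

mutual
  /-- Number of internal vertices of a Schröder tree. -/
  def STree.vS : STree → ℕ
    | .leaf => 0
    | .node f => 1 + f.vF
  def SForest.vF : SForest → ℕ
    | .two a b => a.vS + b.vS
    | .cons a f => a.vS + f.vF
end

mutual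
  /-- `top t`: the binary tree obtained by recursively replacing each internal
  vertex with children `t₁, …, t_c` by the right comb `t₁ ∧ (t₂ ∧ (… ∧ t_c))`. -/
  def STree.top : STree → PBT
    | .leaf => .leaf
    | .node f => f.topF
  def SForest.topF : SForest → PBT
    | .two a b => .node a.top b.top
    | .cons a f => .node a.top f.topF
end

mutual
  /-- `bottom t`: the binary tree obtained by recursively replacing each internal
  vertex with children `t₁, …, t_c` by the left comb `((…(t₁ ∧ t₂)…) ∧ t_c)`. -/
  def STree.bottom : STree → PBT
    | .leaf => .leaf
    | .node f => f.bottomF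
  def SForest.bottomF : SForest → PBT
    | .two a b => .node a.bottom b.bottom
    | .cons a f => SForest.bottomAux a.bottom f
  def SForest.bottomAux : PBT → SForest → PBT
    | acc, .two a b => .node (.node acc a.bottom) b.bottom
    | acc, .cons a f => SForest.bottomAux (.node acc a.bottom) f
end

/-- `e_k(K(n))`: the minimum excess of a length-`k` face chain in the
associahedron `K(n)`.  Faces are Schröder trees with `n` leaves, of dimension
`n − 1 − v(t)`; a face chain of length `k` is a sequence
`F_1 ⊴ F_2 ⊴ … ⊴ F_k` (`F ⊴ G` meaning `top F ≤ bottom G` in the Tamari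
order) of nontrivial faces (at least `2` internal vertices); its excess is
`(n−3) − Σ_i (dim F_i − 1)`. -/
noncomputable def ekAssoc (k n : ℕ) : ℤ :=
  sInf {e : ℤ | ∃ F : Fin k → STree,
    (∀ i, (F i).leavesS = n) ∧ (∀ i, 2 ≤ (F i).vS) ∧
    (∀ i j : Fin k, (i : ℕ) + 1 = (j : ℕ) → Tamari (F i).top (F j).bottom) ∧
    e = ((n : ℤ) - 3) - ∑ i : Fin k, ((((n : ℤ) - 1 - (F i).vS)) - 1)}

-- Part 1: Tamari monotonicity and congruence lemmas

theorem PBT.isInternal_le_one (t : PBT) : t.isInternal ≤ 1 := by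
  cases t <;> simp [PBT.isInternal]

theorem RightRot.isInternal_eq {x y : PBT} (h : RightRot x y) :
    x.isInternal = 1 ∧ y.isInternal = 1 := by
  cases h <;> simp [PBT.isInternal]

theorem RightRot.rightE_le {x y : PBT} (h : RightRot x y) : x.rightE ≤ y.rightE := by
  induction h with
  | rot a b c =>
      have := b.isInternal_le_one
      cases b <;> simp [PBT.rightE, PBT.isInternal] <;> omega
  | left b h ih => simp only [PBT.rightE]; omega
  | right a h ih =>
      have := h.isInternal_eq
      simp only [PBT.rightE]
      omega

theorem Tamari.rightE_le {x y : PBT} (h : Tamari x y) : x.rightE ≤ y.rightE := by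
  induction h with
  | refl => exact le_rfl
  | tail _ h2 ih => exact ih.trans h2.rightE_le

theorem Tamari.trans {x y z : PBT} (h1 : Tamari x y) (h2 : Tamari y z) : Tamari x z :=
  Relation.ReflTransGen.trans h1 h2

theorem Tamari.node_congr {a a' b b' : PBT} (ha : Tamari a a') (hb : Tamari b b') :
    Tamari (.node a b) (.node a' b') := by
  have h1 : Tamari (PBT.node a b) (PBT.node a' b) :=
    ha.lift (fun x => PBT.node x b) (fun _ _ h => RightRot.left b h)
  have h2 : Tamari (PBT.node a' b) (PBT.node a' b') :=
    hb.lift (fun x => PBT.node a' x) (fun _ _ h => RightRot.right a' h)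
  exact h1.trans h2

mutual
theorem tamari_bottom_top : ∀ t : STree, Tamari t.bottom t.top
  | .leaf => Relation.ReflTransGen.refl
  | .node f => by
      simpa [STree.bottom, STree.top] using tamari_bottomF_topF f
theorem tamari_bottomF_topF : ∀ f : SForest, Tamari f.bottomF f.topF
  | .two a b => by
      simp only [SForest.bottomF, SForest.topF]
      exact Tamari.node_congr (tamari_bottom_top a) (tamari_bottom_top b)
  | .cons a f => by
      simp only [SForest.bottomF, SForest.topF]
      exact (tamari_bottomAux f a.bottom).trans
        (Tamari.node_congr (tamari_bottom_top a) Relation.ReflTransGen.refl)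
theorem tamari_bottomAux : ∀ (f : SForest) (acc : PBT),
    Tamari (SForest.bottomAux acc f) (PBT.node acc f.topF)
  | .two a b, acc => by
      simp only [SForest.bottomAux, SForest.topF]
      have h1 : Tamari (PBT.node (PBT.node acc a.bottom) b.bottom)
          (PBT.node (PBT.node acc a.top) b.top) :=
        Tamari.node_congr (Tamari.node_congr Relation.ReflTransGen.refl (tamari_bottom_top a))
          (tamari_bottom_top b)
      exact h1.trans (Relation.ReflTransGen.single (RightRot.rot acc a.top b.top))
  | .cons a f, acc => by
      simp only [SForest.bottomAux, SForest.topF]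
      have h1 := tamari_bottomAux f (PBT.node acc a.bottom)
      have h2 : Tamari (PBT.node (PBT.node acc a.bottom) f.topF)
          (PBT.node (PBT.node acc a.top) f.topF) :=
        Tamari.node_congr (Tamari.node_congr Relation.ReflTransGen.refl (tamari_bottom_top a))
          Relation.ReflTransGen.refl
      exact (h1.trans h2).trans
        (Relation.ReflTransGen.single (RightRot.rot acc a.top f.topF))
end

-- Part 2: counting lemmas

theorem SForest.topF_isInternal (f : SForest) : (f.topF).isInternal = 1 := by
  cases f <;> simp [SForest.topF, PBT.isInternal]

mutual
theorem STree.leaves_le_top : ∀ t : STree, t.leavesS ≤ (t.top).rightE + t.vS + 1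
  | .leaf => by simp [STree.leavesS, STree.top, STree.vS, PBT.rightE]
  | .node f => by
      have := SForest.leaves_le_topF f
      simp only [STree.leavesS, STree.top, STree.vS]
      omega
theorem SForest.leaves_le_topF : ∀ f : SForest, f.leavesF ≤ (f.topF).rightE + f.vF + 2
  | .two a b => by
      have ha := STree.leaves_le_top a
      have hb := STree.leaves_le_top b
      simp only [SForest.leavesF, SForest.topF, SForest.vF, PBT.rightE]
      omega
  | .cons a f => by
      have ha := STree.leaves_le_top a
      have hf := SForest.leaves_le_topF f
      have hi := SForest.topF_isInternal f
      simp only [SForest.leavesF, SForest.topF, SForest.vF, PBT.rightE]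
      omega
end

mutual
theorem STree.bottom_rE : ∀ t : STree, (t.bottom).rightE + (t.bottom).isInternal ≤ t.vS
  | .leaf => by simp [STree.bottom, STree.vS, PBT.rightE, PBT.isInternal]
  | .node f => by
      have := SForest.bottomF_rE f
      have := (f.bottomF).isInternal_le_one
      simp only [STree.bottom, STree.vS]
      omega
theorem SForest.bottomF_rE : ∀ f : SForest, (f.bottomF).rightE ≤ f.vF
  | .two a b => by
      have ha := STree.bottom_rE a
      have hb := STree.bottom_rE b
      simp only [SForest.bottomF, SForest.vF, PBT.rightE]
      omega
  | .cons a f => by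
      have ha := STree.bottom_rE a
      have hf := SForest.bottomAux_rE f a.bottom
      simp only [SForest.bottomF, SForest.vF]
      omega
theorem SForest.bottomAux_rE : ∀ (f : SForest) (acc : PBT),
    (SForest.bottomAux acc f).rightE ≤ acc.rightE + f.vF
  | .two a b, acc => by
      have ha := STree.bottom_rE a
      have hb := STree.bottom_rE b
      simp only [SForest.bottomAux, SForest.vF, PBT.rightE]
      omega
  | .cons a f, acc => by
      have ha := STree.bottom_rE a
      have hf := SForest.bottomAux_rE f (PBT.node acc a.bottom)
      simp only [SForest.bottomAux, SForest.vF, PBT.rightE] at *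
      omega
end

-- Part 3: lower bound for chains

theorem STree.bottom_rE' {t : STree} (ht : 1 ≤ t.vS) : (t.bottom).rightE + 1 ≤ t.vS := by
  cases t with
  | leaf => simp [STree.vS] at ht
  | node f =>
      have := SForest.bottomF_rE f
      simp only [STree.bottom, STree.vS]
      omega

/-- If `top F ≤ bottom G` then `leaves F ≤ v F + v G`. -/
theorem pair_bound {F G : STree} (hG : 1 ≤ G.vS) (h : Tamari F.top G.bottom) :
    F.leavesS ≤ F.vS + G.vS := by
  have h1 := F.leaves_le_top
  have h2 := h.rightE_le
  have h3 := STree.bottom_rE' hG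
  omega

theorem sum_two_bound (n : ℕ) : ∀ k, 2 ≤ k → ∀ w : ℕ → ℕ,
    (∀ i, i + 1 < k → n ≤ w i + w (i + 1)) →
    (∀ i, i + 2 < k → n ≤ w i + w (i + 2)) →
    k * n ≤ 2 * ∑ i ∈ Finset.range k, w i := by
  intro k
  induction k using Nat.strong_induction_on with
  | _ k ih =>
    intro hk w h1 h2
    match k, hk with
    | 2, _ =>
        have a1 := h1 0 (by norm_num)
        norm_num at a1
        simp [Finset.sum_range_succ]
        omega
    | 3, _ =>
        have a1 := h1 0 (by norm_num)
        have a2 := h1 1 (by norm_num)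
        have a3 := h2 0 (by norm_num)
        norm_num at a1 a2 a3
        simp [Finset.sum_range_succ]
        omega
    | (m+4), _ =>
        have hIH := ih (m+2) (by omega) (by omega) w
          (fun i hi => h1 i (by omega)) (fun i hi => h2 i (by omega))
        have ha := h1 (m+2) (by omega)
        rw [Finset.sum_range_succ, Finset.sum_range_succ]
        have hmul : (m + 4) * n = (m + 2) * n + 2 * n := by ring
        linarith [hIH, ha, hmul]

/-- Lower bound on the total number of internal vertices along a face chain. -/
theorem chain_v_lower {k n : ℕ} (hk : 2 ≤ k) (F : Fin k → STree)
    (hl : ∀ i, (F i).leavesS = n) (hv : ∀ i, 2 ≤ (F i).vS)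
    (hc : ∀ i j : Fin k, (i : ℕ) + 1 = (j : ℕ) → Tamari (F i).top (F j).bottom) :
    k * n ≤ 2 * ∑ i : Fin k, (F i).vS := by
  classical
  set w : ℕ → ℕ := fun i => if h : i < k then (F ⟨i, h⟩).vS else 0 with hw
  have hsum : ∑ i : Fin k, (F i).vS = ∑ i ∈ Finset.range k, w i := by
    rw [Finset.sum_range fun i => w i]
    apply Finset.sum_congr rfl
    intro i _
    simp [hw, i.isLt]
  rw [hsum]
  apply sum_two_bound n k hk w
  · intro i hi
    have hik : i < k := by omega
    have h1k : i + 1 < k := hi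
    have hT := hc ⟨i, hik⟩ ⟨i+1, h1k⟩ rfl
    have := pair_bound (G := F ⟨i+1, h1k⟩) (by have := hv ⟨i+1, h1k⟩; omega) hT
    have hle := hl ⟨i, hik⟩
    simp only [hw]
    rw [dif_pos hik, dif_pos h1k]
    omega
  · intro i hi
    have hik : i < k := by omega
    have h1k : i + 1 < k := by omega
    have h2k : i + 2 < k := hi
    have hT1 := hc ⟨i, hik⟩ ⟨i+1, h1k⟩ rfl
    have hT2 := hc ⟨i+1, h1k⟩ ⟨i+2, h2k⟩ rfl
    have hmid := tamari_bottom_top (F ⟨i+1, h1k⟩)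
    have hT : Tamari (F ⟨i, hik⟩).top (F ⟨i+2, h2k⟩).bottom :=
      (hT1.trans hmid).trans hT2
    have := pair_bound (G := F ⟨i+2, h2k⟩) (by have := hv ⟨i+2, h2k⟩; omega) hT
    have hle := hl ⟨i, hik⟩
    simp only [hw]
    rw [dif_pos hik, dif_pos h2k]
    omega

/-- Every element of the chain set satisfies the lower bound. -/
theorem excess_lower {k n : ℕ} (hk : 2 ≤ k) (e : ℤ)
    (he : e ∈ {e : ℤ | ∃ F : Fin k → STree,
      (∀ i, (F i).leavesS = n) ∧ (∀ i, 2 ≤ (F i).vS) ∧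
      (∀ i j : Fin k, (i : ℕ) + 1 = (j : ℕ) → Tamari (F i).top (F j).bottom) ∧
      e = ((n : ℤ) - 3) - ∑ i : Fin k, ((((n : ℤ) - 1 - (F i).vS)) - 1)}) :
    2 * ((n : ℤ) - 3) - 2 * k * ((n : ℤ) - 2) + k * n ≤ 2 * e := by
  obtain ⟨F, hl, hv, hc, he⟩ := he
  have hlow := chain_v_lower hk F hl hv hc
  have hsum : ∑ i : Fin k, ((((n : ℤ) - 1 - (F i).vS)) - 1)
      = k * ((n : ℤ) - 2) - ∑ i : Fin k, ((F i).vS : ℤ) := by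
    have hterm : ∀ i : Fin k, ((n : ℤ) - 1 - (F i).vS - 1) = ((n : ℤ) - 2) - (F i).vS := by
      intro i; ring
    simp only [hterm]
    rw [Finset.sum_sub_distrib, Finset.sum_const, Finset.card_univ, Fintype.card_fin,
      nsmul_eq_mul]
  have hcast : (2 : ℤ) * ∑ i : Fin k, ((F i).vS : ℤ)
      = ((2 * ∑ i : Fin k, (F i).vS : ℕ) : ℤ) := by push_cast; ring
  have hlow' : (k : ℤ) * n ≤ 2 * ∑ i : Fin k, ((F i).vS : ℤ) := by
    rw [hcast]
    exact_mod_cast hlow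
  rw [he, hsum]
  ring_nf
  ring_nf at hlow'
  linarith

-- Part 4: explicit face chains (upper bound)

/-- `A^p x`: attach `p` right leaves, `x ↦ x ∧ l` iterated. -/
def Ai : ℕ → PBT → PBT
  | 0, x => x
  | p+1, x => .node (Ai p x) .leaf

/-- `(B ∘ A)^t x` where `B y = l ∧ y`. -/
def BAi : ℕ → PBT → PBT
  | 0, x => x
  | t+1, x => .node .leaf (.node (BAi t x) .leaf)

/-- `(A ∘ B)^t x`. -/
def ABi : ℕ → PBT → PBT
  | 0, x => x
  | t+1, x => .node (.node .leaf (ABi t x)) .leaf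

/-- Iterated wrapping `x ↦ node (l, x, l)` (ternary spine). -/
def Tw : ℕ → STree → STree
  | 0, x => x
  | t+1, x => .node (.cons .leaf (.two (Tw t x) .leaf))

/-- Iterated wrapping `x ↦ node (x, l)`. -/
def BLw : ℕ → STree → STree
  | 0, x => x
  | p+1, x => .node (.two (BLw p x) .leaf)

def core2 : STree := .node (.two .leaf .leaf)
def core3 : STree := .node (.cons .leaf (.two .leaf .leaf))

def Gface (p t : ℕ) (c : Bool) : STree := BLw p (Tw t (if c then core3 else core2))

-- counting lemmas
theorem Tw_leaves (t : ℕ) (x : STree) : (Tw t x).leavesS = 2 * t + x.leavesS := by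
  induction t with
  | zero => simp [Tw]
  | succ t ih => simp [Tw, STree.leavesS, SForest.leavesF, ih]; omega

theorem BLw_leaves (p : ℕ) (x : STree) : (BLw p x).leavesS = p + x.leavesS := by
  induction p with
  | zero => simp [BLw]
  | succ p ih => simp [BLw, STree.leavesS, SForest.leavesF, ih]; omega

theorem Tw_vS (t : ℕ) (x : STree) : (Tw t x).vS = t + x.vS := by
  induction t with
  | zero => simp [Tw]
  | succ t ih => simp [Tw, STree.vS, SForest.vF, ih]; omega

theorem BLw_vS (p : ℕ) (x : STree) : (BLw p x).vS = p + x.vS := by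
  induction p with
  | zero => simp [BLw]
  | succ p ih => simp [BLw, STree.vS, SForest.vF, ih]; omega

theorem core2_leaves : core2.leavesS = 2 := rfl
theorem core3_leaves : core3.leavesS = 3 := rfl
theorem core2_vS : core2.vS = 1 := rfl
theorem core3_vS : core3.vS = 1 := rfl

theorem Gface_leaves (p t : ℕ) (c : Bool) :
    (Gface p t c).leavesS = p + 2 * t + (if c then 3 else 2) := by
  cases c <;> simp [Gface, BLw_leaves, Tw_leaves, core2_leaves, core3_leaves] <;> omega

theorem Gface_vS (p t : ℕ) (c : Bool) : (Gface p t c).vS = p + t + 1 := by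
  cases c <;> simp [Gface, BLw_vS, Tw_vS, core2_vS, core3_vS] <;> omega

-- top and bottom computations
theorem Tw_top (t : ℕ) (x : STree) : (Tw t x).top = BAi t x.top := by
  induction t with
  | zero => simp [Tw, BAi]
  | succ t ih => simp [Tw, BAi, STree.top, SForest.topF, ih]

theorem Tw_bottom (t : ℕ) (x : STree) : (Tw t x).bottom = ABi t x.bottom := by
  induction t with
  | zero => simp [Tw, ABi]
  | succ t ih =>
      simp [Tw, ABi, STree.bottom, SForest.bottomF, SForest.bottomAux, ih]

theorem BLw_top (p : ℕ) (x : STree) : (BLw p x).top = Ai p x.top := by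
  induction p with
  | zero => simp [BLw, Ai]
  | succ p ih => simp [BLw, Ai, STree.top, SForest.topF, ih]

theorem BLw_bottom (p : ℕ) (x : STree) : (BLw p x).bottom = Ai p x.bottom := by
  induction p with
  | zero => simp [BLw, Ai]
  | succ p ih => simp [BLw, Ai, STree.bottom, SForest.bottomF, ih]

theorem core2_top : core2.top = PBT.node .leaf .leaf := rfl
theorem core2_bottom : core2.bottom = PBT.node .leaf .leaf := rfl
theorem core3_top : core3.top = PBT.node .leaf (.node .leaf .leaf) := rfl
theorem core3_bottom : core3.bottom = PBT.node (.node .leaf .leaf) .leaf := rfl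

-- word identities
theorem Ai_shift (p : ℕ) (x : PBT) : Ai (p+1) x = Ai p (.node x .leaf) := by
  induction p with
  | zero => rfl
  | succ p ih => simp [Ai] at *; exact ih

theorem I1 (t : ℕ) (y : PBT) :
    PBT.node (BAi t (.node .leaf y)) .leaf = ABi (t+1) y := by
  induction t with
  | zero => rfl
  | succ t ih => simp only [BAi]; rw [ih]; rfl

theorem I2 (t : ℕ) :
    PBT.node (BAi t (.node .leaf .leaf)) .leaf
      = ABi t (.node (.node .leaf .leaf) .leaf) := by
  induction t with
  | zero => rfl
  | succ t ih => simp only [BAi]; rw [ih]; rfl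

/-- Chain step from an even position. -/
theorem claim1 (q t : ℕ) :
    (Gface (q+1) t true).top = (Gface q (t+1) false).bottom := by
  simp only [Gface, if_pos, if_neg, Bool.false_eq_true, not_false_iff, ite_true, ite_false]
  rw [BLw_top, BLw_bottom, Tw_top, Tw_bottom, core3_top, core2_bottom]
  rw [Ai_shift]
  congr 1
  have := I1 t (.node .leaf .leaf)
  simpa [ABi] using this

/-- Chain step from an odd position. -/
theorem claim2 (q t : ℕ) :
    (Gface (q+1) t false).top = (Gface q t true).bottom := by
  simp only [Gface, Bool.false_eq_true, ite_true, ite_false]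
  rw [BLw_top, BLw_bottom, Tw_top, Tw_bottom, core2_top, core3_bottom]
  rw [Ai_shift]
  congr 1
  exact I2 t

-- Part 5: the upper-bound chain

theorem sum_dim (k n : ℕ) (F : Fin k → STree) :
    ∑ i : Fin k, ((((n : ℤ) - 1 - (F i).vS)) - 1)
      = k * ((n : ℤ) - 2) - ∑ i : Fin k, ((F i).vS : ℤ) := by
  have hterm : ∀ i : Fin k, ((n : ℤ) - 1 - (F i).vS - 1) = ((n : ℤ) - 2) - (F i).vS := by
    intro i; ring
  simp only [hterm]
  rw [Finset.sum_sub_distrib, Finset.sum_const, Finset.card_univ, Fintype.card_fin,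
    nsmul_eq_mul]

theorem excess_upper {k n : ℕ} (hk : 2 ≤ k) (hn : 2 * k + 6 ≤ n) :
    ∃ e : ℤ, (e ∈ {e : ℤ | ∃ F : Fin k → STree,
      (∀ i, (F i).leavesS = n) ∧ (∀ i, 2 ≤ (F i).vS) ∧
      (∀ i j : Fin k, (i : ℕ) + 1 = (j : ℕ) → Tamari (F i).top (F j).bottom) ∧
      e = ((n : ℤ) - 3) - ∑ i : Fin k, ((((n : ℤ) - 1 - (F i).vS)) - 1)}) ∧
      2 * e ≤ 2 * ((n : ℤ) - 3) - 2 * k * ((n : ℤ) - 2) + k * n + 2 * k * k := by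
  obtain ⟨p₀, t₀, hp1, hp2, ht1, hn'⟩ :
      ∃ p₀ t₀ : ℕ, k - 1 ≤ p₀ ∧ p₀ ≤ k ∧ 1 ≤ t₀ ∧ n = p₀ + 2 * t₀ + 3 := by
    by_cases h : n % 2 = k % 2
    · exact ⟨k - 1, (n - (k - 1) - 3) / 2, le_rfl, by omega, by omega, by omega⟩
    · exact ⟨k, (n - k - 3) / 2, by omega, le_rfl, by omega, by omega⟩
  set F : Fin k → STree :=
    fun i => Gface (p₀ - (i : ℕ)) (t₀ + ((i : ℕ) + 1) / 2) (decide ((i : ℕ) % 2 = 0)) with hF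
  have hle : ∀ i, (F i).leavesS = n := by
    intro i
    have hik : (i : ℕ) < k := i.isLt
    by_cases h : (i : ℕ) % 2 = 0 <;>
      simp [hF, Gface_leaves, h] <;> omega
  have hv : ∀ i, 2 ≤ (F i).vS := by
    intro i
    simp [hF, Gface_vS]
    omega
  have hc : ∀ i j : Fin k, (i : ℕ) + 1 = (j : ℕ) → Tamari (F i).top (F j).bottom := by
    intro i j hij
    have hik : (i : ℕ) < k := i.isLt
    have hjk : (j : ℕ) < k := j.isLt
    have hip : (i : ℕ) + 1 ≤ p₀ := by omega
    by_cases h : (i : ℕ) % 2 = 0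
    · have e1 : F i = Gface ((p₀ - (i : ℕ) - 1) + 1) (t₀ + ((i : ℕ) + 1) / 2) true := by
        simp only [hF]
        have a1 : p₀ - (i : ℕ) = (p₀ - (i : ℕ) - 1) + 1 := by omega
        have a3 : decide ((i : ℕ) % 2 = 0) = true := by simp [h]
        rw [a3, ← a1]
      have e2 : F j = Gface (p₀ - (i : ℕ) - 1) ((t₀ + ((i : ℕ) + 1) / 2) + 1) false := by
        simp only [hF]
        have a1 : p₀ - (j : ℕ) = p₀ - (i : ℕ) - 1 := by omega
        have a2 : t₀ + ((j : ℕ) + 1) / 2 = (t₀ + ((i : ℕ) + 1) / 2) + 1 := by omega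
        have a3 : decide ((j : ℕ) % 2 = 0) = false := by
          simp only [decide_eq_false_iff_not]
          omega
        rw [a1, a2, a3]
      rw [e1, e2, claim1]
      exact Relation.ReflTransGen.refl
    · have e1 : F i = Gface ((p₀ - (i : ℕ) - 1) + 1) (t₀ + ((i : ℕ) + 1) / 2) false := by
        simp only [hF]
        have a1 : p₀ - (i : ℕ) = (p₀ - (i : ℕ) - 1) + 1 := by omega
        have a3 : decide ((i : ℕ) % 2 = 0) = false := by
          simp only [decide_eq_false_iff_not]; omega
        rw [a3, ← a1]
      have e2 : F j = Gface (p₀ - (i : ℕ) - 1) (t₀ + ((i : ℕ) + 1) / 2) true := by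
        simp only [hF]
        have a1 : p₀ - (j : ℕ) = p₀ - (i : ℕ) - 1 := by omega
        have a2 : t₀ + ((j : ℕ) + 1) / 2 = t₀ + ((i : ℕ) + 1) / 2 := by omega
        have a3 : decide ((j : ℕ) % 2 = 0) = true := by
          simp only [decide_eq_true_eq]; omega
        rw [a1, a2, a3]
      rw [e1, e2, claim2]
      exact Relation.ReflTransGen.refl
  refine ⟨_, ⟨F, hle, hv, hc, rfl⟩, ?_⟩
  have hvd : ∀ i : Fin k, (F i).vS ≤ p₀ + t₀ + 1 := by
    intro i
    simp only [hF, Gface_vS]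
    omega
  have hS : 2 * (∑ i : Fin k, (F i).vS) ≤ k * n + 2 * (k * k) := by
    have h1 : (∑ i : Fin k, (F i).vS) ≤ k * (p₀ + t₀ + 1) := by
      calc (∑ i : Fin k, (F i).vS) ≤ ∑ _i : Fin k, (p₀ + t₀ + 1) :=
            Finset.sum_le_sum fun i _ => hvd i
        _ = k * (p₀ + t₀ + 1) := by
            rw [Finset.sum_const, Finset.card_univ, Fintype.card_fin, smul_eq_mul]
    calc 2 * (∑ i : Fin k, (F i).vS) ≤ 2 * (k * (p₀ + t₀ + 1)) := by omega
      _ = k * (2 * (p₀ + t₀ + 1)) := by ring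
      _ ≤ k * (n + 2 * k) := Nat.mul_le_mul_left k (by omega)
      _ = k * n + 2 * (k * k) := by ring
  rw [sum_dim]
  have hcast : ((2 * (∑ i : Fin k, (F i).vS) : ℕ) : ℤ) = 2 * ∑ i : Fin k, ((F i).vS : ℤ) := by
    push_cast; ring
  have hS' : 2 * ∑ i : Fin k, ((F i).vS : ℤ) ≤ (k : ℤ) * n + 2 * (k * k) := by
    rw [← hcast]
    exact_mod_cast hS
  ring_nf
  ring_nf at hS'
  linarith

-- Part 6: bounds on ekAssoc and the limit

theorem ekAssoc_bounds {k n : ℕ} (hk : 2 ≤ k) (hn : 2 * k + 6 ≤ n) :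
    2 * ((n : ℤ) - 3) - 2 * k * ((n : ℤ) - 2) + k * n ≤ 2 * ekAssoc k n ∧
    2 * ekAssoc k n ≤ 2 * ((n : ℤ) - 3) - 2 * k * ((n : ℤ) - 2) + k * n + 2 * k * k := by
  obtain ⟨e₀, he₀, hb⟩ := excess_upper hk hn
  set S : Set ℤ := {e : ℤ | ∃ F : Fin k → STree,
      (∀ i, (F i).leavesS = n) ∧ (∀ i, 2 ≤ (F i).vS) ∧
      (∀ i j : Fin k, (i : ℕ) + 1 = (j : ℕ) → Tamari (F i).top (F j).bottom) ∧
      e = ((n : ℤ) - 3) - ∑ i : Fin k, ((((n : ℤ) - 1 - (F i).vS)) - 1)} with hSdef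
  have hne : S.Nonempty := ⟨e₀, he₀⟩
  have hbdd : BddBelow S := by
    refine ⟨(2 * ((n : ℤ) - 3) - 2 * k * ((n : ℤ) - 2) + k * n) / 2 - 1, ?_⟩
    intro e he
    have h2 := excess_lower hk e he
    omega
  have hmem : sInf S ∈ S := Int.csInf_mem hne hbdd
  have hlow := excess_lower hk _ hmem
  have hup : sInf S ≤ e₀ := csInf_le hbdd he₀
  have : ekAssoc k n = sInf S := rfl
  rw [this]
  omega

/-- The family of associahedra has asymptotic `k`-length `(k−2)/(2k−2)`: for
every `k ≥ 2`, the ratio `e_k(K(n)) / E_k(n−2)` tends to `(k−2)/(2k−2)` as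
`n → ∞`, where `E_k(d) = (1−k)d + 2k − 1`. -/
theorem associahedra_asymptotic_k_length (k : ℕ) (hk : 2 ≤ k) :
    Filter.Tendsto
      (fun n : ℕ => (ekAssoc k n : ℝ) /
        ((1 - (k : ℝ)) * ((n : ℝ) - 2) + 2 * (k : ℝ) - 1))
      Filter.atTop (nhds (((k : ℝ) - 2) / (2 * (k : ℝ) - 2))) := by
  have hk2 : (2 : ℝ) ≤ (k : ℝ) := by exact_mod_cast hk
  have hden : (2 : ℝ) * k - 2 ≠ 0 := by nlinarith
  set ℓ : ℝ := ((k : ℝ) - 2) / (2 * (k : ℝ) - 2) with hℓ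
  set D : ℕ → ℝ := fun n => (1 - (k : ℝ)) * ((n : ℝ) - 2) + 2 * (k : ℝ) - 1 with hD
  set γ : ℝ := (2 * (k : ℝ) - 3) - ((k : ℝ) - 2) * (4 * (k : ℝ) - 3) / (2 * (k : ℝ) - 2)
    with hγ
  set C : ℝ := |γ| + (k : ℝ) * k with hC
  -- algebraic identity
  have halg : ∀ n : ℕ,
      (2 * ((n : ℝ) - 3) - 2 * k * ((n : ℝ) - 2) + k * n) / 2 - ℓ * D n = γ := by
    intro n
    rw [hℓ, hD, hγ]
    have hk1 : (k : ℝ) - 1 ≠ 0 := by linarith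
    field_simp
    ring
  -- |D| → ∞
  have hDabs : Filter.Tendsto (fun n : ℕ => |D n|) Filter.atTop Filter.atTop := by
    have hEv : (fun n : ℕ => (n : ℝ) - (2 * k + 1)) ≤ᶠ[Filter.atTop]
        fun n : ℕ => |D n| := by
      filter_upwards [Filter.eventually_ge_atTop 2] with n hn2
      have hn2' : (2 : ℝ) ≤ (n : ℝ) := by exact_mod_cast hn2
      have h1 : (n : ℝ) - (2 * k + 1) ≤ -(D n) := by
        rw [hD]
        simp only
        nlinarith
      exact h1.trans (neg_le_abs (D n))
    exact Filter.tendsto_atTop_mono' _ hEv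
      (Filter.tendsto_atTop_add_const_right _ _ tendsto_natCast_atTop_atTop)
  rw [← tendsto_sub_nhds_zero_iff]
  apply squeeze_zero_norm' (a := fun n : ℕ => C / |D n|)
  · filter_upwards [Filter.eventually_ge_atTop (2 * k + 6)] with n hn
    have hbnds := ekAssoc_bounds hk hn
    -- real versions
    have hnn : (2 * k + 6 : ℝ) ≤ (n : ℝ) := by exact_mod_cast hn
    have hDneg : D n < 0 := by
      rw [hD]; simp only; nlinarith
    have hD0 : D n ≠ 0 := ne_of_lt hDneg
    have hDpos : 0 < |D n| := abs_pos.mpr hD0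
    set E : ℝ := (ekAssoc k n : ℝ) with hE
    have hL : (2 * ((n : ℝ) - 3) - 2 * k * ((n : ℝ) - 2) + k * n) ≤ 2 * E := by
      have := hbnds.1
      rw [hE]
      exact_mod_cast this
    have hU : 2 * E ≤ (2 * ((n : ℝ) - 3) - 2 * k * ((n : ℝ) - 2) + k * n) + 2 * k * k := by
      have := hbnds.2
      rw [hE]
      exact_mod_cast this
    have heq : E / D n - ℓ = (E - ℓ * D n) / D n := by
      field_simp
    rw [heq]
    rw [Real.norm_eq_abs, abs_div]
    rw [div_le_div_iff_of_pos_right hDpos]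
    have hg := halg n
    have h1 : γ ≤ |γ| := le_abs_self γ
    have h2 : -|γ| ≤ γ := neg_abs_le γ
    rw [abs_le]
    clear_value C γ ℓ D E
    constructor <;> linarith [hg, hL, hU, h1, h2, mul_self_nonneg ((k : ℝ))]
  · exact Filter.Tendsto.div_atTop tendsto_const_nhds hDabs
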